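/- Let G₁ = (V, E₁, w) and G₂ = (V, E₂, w) be weighted graphs on the same vertex set with distinct edge weights, and let F₁, F₂ be their minimum spanning forests. Then the minimum spanning forest of (V, E₁ ∪ E₂) equals the minimum spanning forest of (V, F₁ ∪ F₂). -/

import Mathlib

/-- `F` is a spanning forest of the graph with edge set `E`: it is a subset of `E`,
acyclic, and has the same reachability relation as `E`. -/
def IsSpanningForest (V : Type) (E F : Finset (Sym2 V)) : Prop :=
  F ⊆ E ∧ (SimpleGraph.fromEdgeSet (↑F : Set (Sym2 V))).IsAcyclic ∧
    ∀ u v : V, (SimpleGraph.fromEdgeSet (↑E : Set (Sym2 V))).Reachable u v ↔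
      (SimpleGraph.fromEdgeSet (↑F : Set (Sym2 V))).Reachable u v

/-- `F` is a minimum spanning forest of the graph with edge set `E` and weights `w`. -/
def IsMSF (V : Type) (w : Sym2 V → ℝ) (E F : Finset (Sym2 V)) : Prop :=
  IsSpanningForest V E F ∧
    ∀ F' : Finset (Sym2 V), IsSpanningForest V E F' → ∑ e ∈ F, w e ≤ ∑ e ∈ F', w e


open SimpleGraph Finset

variable {V : Type}

/-- A walk all of whose edges lie in `K` yields reachability in `K`. -/
lemma MSFaux.reach_of_walk {H K : SimpleGraph V} {u v : V} (p : H.Walk u v)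
    (h : ∀ g ∈ p.edges, g ∈ K.edgeSet) : K.Reachable u v := by
  induction p with
  | nil => exact Reachable.refl _
  | @cons u c v ha p ih =>
    have h1 : K.Adj u c := (SimpleGraph.mem_edgeSet (G := K)).mp (h s(u, c) (by simp))
    exact h1.reachable.trans (ih fun g hg => h g (by simp [hg]))

/-- Along a walk from `u` to `v` with `u, v` not `K`-reachable, there is a boundary edge. -/
lemma MSFaux.exists_boundary {H K : SimpleGraph V} {u v : V} (p : H.Walk u v)
    (hn : ¬K.Reachable u v) :
    ∃ x y, s(x, y) ∈ p.edges ∧ K.Reachable u x ∧ ¬K.Reachable x y := by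
  induction p with
  | nil => exact absurd (Reachable.refl _) hn
  | @cons u c v ha p ih =>
    by_cases h : K.Reachable u c
    · obtain ⟨x, y, hxy, hux, hnxy⟩ := ih (fun hr => hn (h.trans hr))
      exact ⟨x, y, by simp [hxy], h.trans hux, hnxy⟩
    · exact ⟨u, c, by simp, Reachable.refl _, h⟩

/-- Splitting a trail containing the edge `s(a,b)`, all of whose other edges lie in `K`. -/
lemma MSFaux.walk_split {H K : SimpleGraph V} {u v a b : V} (p : H.Walk u v)
    (ht : p.IsTrail) (hf : s(a, b) ∈ p.edges)
    (hK : ∀ g ∈ p.edges, g ≠ s(a, b) → g ∈ K.edgeSet) :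
    (K.Reachable u a ∧ K.Reachable b v) ∨ (K.Reachable u b ∧ K.Reachable a v) := by
  induction p with
  | nil => simp at hf
  | @cons u c v ha p ih =>
    rw [SimpleGraph.Walk.edges_cons, List.mem_cons] at hf
    by_cases hec : s(u, c) = s(a, b)
    · have hnotin : s(a, b) ∉ p.edges := by
        intro hin
        have := ht.edges_nodup
        rw [SimpleGraph.Walk.edges_cons] at this
        exact (List.nodup_cons.mp this).1 (hec ▸ hin)
      have hcv : K.Reachable c v :=
        MSFaux.reach_of_walk p (fun g hg => hK g (by simp [hg])
          (fun h => hnotin (h ▸ hg)))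
      rcases Sym2.eq_iff.mp hec with ⟨rfl, rfl⟩ | ⟨rfl, rfl⟩
      · exact Or.inl ⟨Reachable.refl _, hcv⟩
      · exact Or.inr ⟨Reachable.refl _, hcv⟩
    · have huc : K.Reachable u c := Adj.reachable (by
        have := hK s(u, c) (by simp) hec
        exact this)
      rcases ih ht.of_cons (hf.resolve_left (fun h => hec h.symm))
          (fun g hg hgne => hK g (by simp [hg]) hgne) with ⟨h1, h2⟩ | ⟨h1, h2⟩
      · exact Or.inl ⟨huc.trans h1, h2⟩
      · exact Or.inr ⟨huc.trans h1, h2⟩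

/-- Acyclicity is antitone. -/
lemma MSFaux.isAcyclic_mono {G H : SimpleGraph V} (hle : G ≤ H) (hH : H.IsAcyclic) :
    G.IsAcyclic := by
  intro v c hc
  exact hH ((c.transfer H (fun e he => edgeSet_mono hle (c.edges_subset_edgeSet he)))) 
    (hc.transfer _)

/-- Adding an edge between vertices of distinct components of an acyclic graph keeps acyclicity. -/
lemma MSFaux.isAcyclic_sup_edge {G : SimpleGraph V} {u v : V} (hG : G.IsAcyclic)
    (hne : u ≠ v) (hr : ¬G.Reachable u v) :
    (G ⊔ fromEdgeSet {s(u, v)}).IsAcyclic := by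
  intro x c hc
  by_cases he : s(u, v) ∈ c.edges
  · have hreach : ((G ⊔ fromEdgeSet {s(u, v)}) \ fromEdgeSet {s(u, v)}).Reachable u v :=
      (adj_and_reachable_delete_edges_iff_exists_cycle.mpr ⟨x, c, hc, he⟩).2
    refine hr (hreach.mono ?_)
    intro a b hab
    simp only [sdiff_adj, sup_adj, fromEdgeSet_adj, Set.mem_singleton_iff] at hab
    rcases hab.1 with h | h
    · exact h
    · exact absurd ⟨h.1, h.2⟩ hab.2
  · refine hG (c.transfer G ?_) (hc.transfer _)
    intro g hg
    have := c.edges_subset_edgeSet hg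
    rw [edgeSet_sup] at this
    rcases this with h | h
    · exact h
    · rw [SimpleGraph.edgeSet_fromEdgeSet] at h
      obtain ⟨h1, h2⟩ := h
      exact absurd (h1 ▸ hg : s(u,v) ∈ c.edges) he

variable {V : Type} [DecidableEq V]

namespace MSFaux

/-- The simple graph on `V` with edge set `F`. -/
abbrev gr (F : Finset (Sym2 V)) : SimpleGraph V := fromEdgeSet (↑F : Set (Sym2 V))

lemma gr_adj {F : Finset (Sym2 V)} {x y : V} :
    (gr F).Adj x y ↔ s(x, y) ∈ F ∧ x ≠ y := by
  simp [gr, fromEdgeSet_adj]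

lemma mem_of_walk_edge {F : Finset (Sym2 V)} {u v : V} {p : (gr F).Walk u v} {g : Sym2 V}
    (hg : g ∈ p.edges) : g ∈ F ∧ ¬g.IsDiag := by
  have h := p.edges_subset_edgeSet hg
  rw [edgeSet_fromEdgeSet] at h
  exact ⟨h.1, h.2⟩

lemma gr_mono {F F' : Finset (Sym2 V)} (h : F ⊆ F') : gr F ≤ gr F' :=
  fromEdgeSet_mono (by exact_mod_cast h)

lemma gr_erase {F : Finset (Sym2 V)} {e : Sym2 V} :
    gr (F.erase e) = gr F \ fromEdgeSet {e} := by
  rw [gr, Finset.coe_erase, fromEdgeSet_sdiff]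

lemma not_reachable_erase {F : Finset (Sym2 V)} {a b : V} (hG : (gr F).IsAcyclic)
    (hm : s(a, b) ∈ F) (hne : a ≠ b) :
    ¬(gr (F.erase s(a, b))).Reachable a b := by
  have hadj : (gr F).Adj a b := gr_adj.mpr ⟨hm, hne⟩
  have hb := (isAcyclic_iff_forall_adj_isBridge.mp hG) hadj
  intro hr
  exact hb (by rwa [gr_erase] at hr)

lemma gr_insert {F : Finset (Sym2 V)} {e : Sym2 V} :
    gr (insert e F) = gr F ⊔ fromEdgeSet {e} := by
  rw [gr, Finset.coe_insert, Set.insert_eq, fromEdgeSet_union, sup_comm]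

lemma isAcyclic_insert {F : Finset (Sym2 V)} {u v : V} (hG : (gr F).IsAcyclic)
    (hne : u ≠ v) (hr : ¬(gr F).Reachable u v) :
    (gr (insert s(u, v) F)).IsAcyclic := by
  rw [gr_insert]
  exact isAcyclic_sup_edge hG hne hr

lemma acyclic_of_subset {F F' : Finset (Sym2 V)} (h : F ⊆ F') (hG : (gr F').IsAcyclic) :
    (gr F).IsAcyclic := isAcyclic_mono (gr_mono h) hG


lemma mem_gr_edgeSet {F : Finset (Sym2 V)} {g : Sym2 V} :
    g ∈ (gr F).edgeSet ↔ g ∈ F ∧ ¬g.IsDiag := by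
  rw [gr, edgeSet_fromEdgeSet]
  simp

lemma reach_hom {H K : SimpleGraph V} (h : ∀ x y, H.Adj x y → K.Reachable x y) {u v : V}
    (hr : H.Reachable u v) : K.Reachable u v := by
  obtain ⟨p⟩ := hr
  induction p with
  | nil => exact Reachable.refl _
  | cons ha _ ih => exact (h _ _ ha).trans ih

end MSFaux

open MSFaux in
/-- Cycle property: a non-forest edge of an MSF instance has its endpoints joined by a
path in the forest all of whose edges are strictly lighter. -/
lemma MSFaux.light_path {E F : Finset (Sym2 V)} {w : Sym2 V → ℝ}
    (hinj : Set.InjOn w (↑E : Set (Sym2 V)))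
    (hMSF : IsMSF V w E F) {u v : V} (hne : u ≠ v)
    (he : s(u, v) ∈ E) (hef : s(u, v) ∉ F) :
    ∃ p : (gr F).Walk u v, p.IsPath ∧ ∀ f ∈ p.edges, w f < w s(u, v) := by
  obtain ⟨⟨hFE, hac, hreach⟩, hmin⟩ := hMSF
  have hr : (gr F).Reachable u v :=
    (hreach u v).mp (Adj.reachable (gr_adj.mpr ⟨he, hne⟩))
  obtain ⟨p0⟩ := hr
  refine ⟨p0.toPath, p0.toPath.2, ?_⟩
  intro f hfedges
  induction f using Sym2.ind with
  | _ a b =>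
  obtain ⟨hfF, hfnd⟩ := mem_of_walk_edge hfedges
  have hab : a ≠ b := fun h => hfnd (by simp [h])
  have hfe : s(a, b) ≠ s(u, v) := fun h => hef (h ▸ hfF)
  by_contra hcon
  have hwne : w s(a, b) ≠ w s(u, v) :=
    fun h => hfe (hinj (Finset.mem_coe.mpr (hFE hfF)) (Finset.mem_coe.mpr he) h)
  have hlt : w s(u, v) < w s(a, b) := lt_of_le_of_ne (not_lt.mp hcon) (Ne.symm hwne)
  -- the exchange forest
  set K := gr (F.erase s(a, b)) with hK
  have hbridge : ¬K.Reachable a b := not_reachable_erase hac hfF hab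
  have hedgesK : ∀ g ∈ (p0.toPath : (gr F).Walk u v).edges, g ≠ s(a, b) → g ∈ K.edgeSet := by
    intro g hg hgne
    obtain ⟨h1, h2⟩ := mem_of_walk_edge hg
    exact mem_gr_edgeSet.mpr ⟨Finset.mem_erase.mpr ⟨hgne, h1⟩, h2⟩
  have hKuv : ¬K.Reachable u v := by
    intro hKuv
    rcases walk_split _ p0.toPath.2.isTrail hfedges hedgesK with ⟨h1, h2⟩ | ⟨h1, h2⟩
    · exact hbridge ((h1.symm.trans hKuv).trans h2.symm)
    · exact hbridge ((h2.trans hKuv.symm).trans h1)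
  set F'' := insert s(u, v) (F.erase s(a, b)) with hF''
  have hsub : F'' ⊆ E := by
    intro g hg
    rcases Finset.mem_insert.mp hg with rfl | hg
    · exact he
    · exact hFE (Finset.mem_of_mem_erase hg)
  have hac'' : (gr F'').IsAcyclic :=
    isAcyclic_insert (acyclic_of_subset (Finset.erase_subset _ _) hac) hne hKuv
  have hKle : K ≤ gr F'' := gr_mono (Finset.subset_insert _ _)
  have huv'' : (gr F'').Reachable u v :=
    Adj.reachable (gr_adj.mpr ⟨Finset.mem_insert_self _ _, hne⟩)
  have hFle : ∀ x y : V, (gr F).Adj x y → (gr F'').Reachable x y := by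
    intro x y hxy
    rw [gr_adj] at hxy
    by_cases hgx : s(x, y) = s(a, b)
    · have hab'' : (gr F'').Reachable a b := by
        have hedgesK'' : ∀ g ∈ (p0.toPath : (gr F).Walk u v).edges,
            g ≠ s(a, b) → g ∈ (gr F'').edgeSet := by
          intro g hg hgne
          exact edgeSet_mono hKle (hedgesK g hg hgne)
        rcases walk_split _ p0.toPath.2.isTrail hfedges hedgesK'' with ⟨h1, h2⟩ | ⟨h1, h2⟩
        · exact (h1.symm.trans huv'').trans h2.symm
        · exact (h2.trans huv''.symm).trans h1
      rcases Sym2.eq_iff.mp hgx with ⟨rfl, rfl⟩ | ⟨rfl, rfl⟩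
      · exact hab''
      · exact hab''.symm
    · exact Adj.reachable (gr_adj.mpr ⟨Finset.mem_insert_of_mem
        (Finset.mem_erase.mpr ⟨hgx, hxy.1⟩), hxy.2⟩)
  have hSF'' : IsSpanningForest V E F'' := by
    refine ⟨hsub, hac'', fun x y => ⟨?_, ?_⟩⟩
    · intro hxy
      exact reach_hom hFle ((hreach x y).mp hxy)
    · intro hxy
      exact hxy.mono (gr_mono hsub)
  have hsum := hmin F'' hSF''
  rw [hF'', Finset.sum_insert (fun h => hef (Finset.mem_of_mem_erase h))] at hsum
  have herase : ∑ e ∈ F.erase s(a, b), w e + w s(a, b) = ∑ e ∈ F, w e :=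
    Finset.sum_erase_add _ _ hfF
  linarith


open MSFaux in
/-- Exchange step: a spanning forest `F'` of `E` containing an edge `e ∈ Eᵢ \ Fᵢ`
can be improved by swapping `e` for a lighter edge `g ∈ Fᵢ`. -/
lemma MSFaux.exchange {E Ei Fi F' : Finset (Sym2 V)} {w : Sym2 V → ℝ}
    (hinj : Set.InjOn w (↑E : Set (Sym2 V)))
    (hEi : Ei ⊆ E)
    (hi : IsMSF V w Ei Fi)
    (hSF : IsSpanningForest V E F')
    {e : Sym2 V} (heF' : e ∈ F') (heEi : e ∈ Ei) (heFi : e ∉ Fi) (hend : ¬e.IsDiag) :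
    ∃ g ∈ Fi, g ∉ F'.erase e ∧ w g < w e ∧
      IsSpanningForest V E (insert g (F'.erase e)) := by
  induction e using Sym2.ind with
  | _ u v =>
  have hne : u ≠ v := fun h => hend (by simp [h])
  obtain ⟨hF'E, hacF', hreachF'⟩ := hSF
  have hFiE : Fi ⊆ E := hi.1.1.trans hEi
  obtain ⟨p, hp, hlight⟩ :=
    light_path (Set.InjOn.mono (by exact_mod_cast hEi) hinj) hi hne heEi heFi
  set K := gr (F'.erase s(u, v)) with hKdef
  have hKuv : ¬K.Reachable u v := not_reachable_erase hacF' heF' hne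
  obtain ⟨a, b, hgedge, hua, hnab⟩ := exists_boundary p hKuv
  obtain ⟨hgFi, hgnd⟩ := mem_of_walk_edge hgedge
  have hab : a ≠ b := fun h => hgnd (by simp [h])
  have hwlt : w s(a, b) < w s(u, v) := hlight _ hgedge
  have huaK : K.Reachable u a := hua
  have hgnotin : s(a, b) ∉ F'.erase s(u, v) := fun h =>
    hnab (Adj.reachable (gr_adj.mpr ⟨h, hab⟩))
  -- `b` reaches `v` in `K`
  have hbv_Fi : (gr Fi).Reachable b v :=
    ⟨p.dropUntil b (p.snd_mem_support_of_mem_edges hgedge)⟩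
  have hbvF' : (gr F').Reachable b v := (hreachF' b v).mp (hbv_Fi.mono (gr_mono hFiE))
  have hKbv : K.Reachable b v := by
    obtain ⟨q0⟩ := hbvF'
    by_cases hq : s(u, v) ∈ (q0.toPath : (gr F').Walk b v).edges
    · rcases walk_split _ q0.toPath.2.isTrail hq
          (fun g hg hgne => by
            obtain ⟨h1, h2⟩ := mem_of_walk_edge hg
            exact mem_gr_edgeSet.mpr ⟨Finset.mem_erase.mpr ⟨hgne, h1⟩, h2⟩)
          with ⟨h1, h2⟩ | ⟨h1, h2⟩
      · exact absurd ((h1.trans huaK).symm) hnab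
      · exact h1
    · refine reach_of_walk (q0.toPath : (gr F').Walk b v) ?_
      intro g hg
      obtain ⟨h1, h2⟩ := mem_of_walk_edge hg
      exact mem_gr_edgeSet.mpr ⟨Finset.mem_erase.mpr ⟨fun h => hq (h ▸ hg), h1⟩, h2⟩
  set F'' := insert s(a, b) (F'.erase s(u, v)) with hF''def
  have hKle : K ≤ gr F'' := gr_mono (Finset.subset_insert _ _)
  have hsub : F'' ⊆ E := by
    intro g hg
    rcases Finset.mem_insert.mp hg with rfl | hg
    · exact hFiE hgFi
    · exact hF'E (Finset.mem_of_mem_erase hg)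
  have hac'' : (gr F'').IsAcyclic :=
    isAcyclic_insert (acyclic_of_subset (Finset.erase_subset _ _) hacF') hab hnab
  have huv'' : (gr F'').Reachable u v :=
    ((huaK.mono hKle).trans
      (Adj.reachable (gr_adj.mpr ⟨Finset.mem_insert_self _ _, hab⟩))).trans
      (hKbv.mono hKle)
  refine ⟨s(a, b), hgFi, hgnotin, hwlt, hsub, hac'', fun x y => ⟨?_, ?_⟩⟩
  · intro hxy
    refine reach_hom (K := gr F'') ?_ ((hreachF' x y).mp hxy)
    intro x' y' hxy'
    rw [gr_adj] at hxy'
    by_cases hgx : s(x', y') = s(u, v)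
    · rcases Sym2.eq_iff.mp hgx with ⟨rfl, rfl⟩ | ⟨rfl, rfl⟩
      · exact huv''
      · exact huv''.symm
    · exact Adj.reachable (gr_adj.mpr ⟨Finset.mem_insert_of_mem
        (Finset.mem_erase.mpr ⟨hgx, hxy'.1⟩), hxy'.2⟩)
  · intro hxy
    exact hxy.mono (gr_mono hsub)


open MSFaux

/-- Sparsification correctness: if `F₁`, `F₂` are the MSFs of `(V, E₁)`, `(V, E₂)`
(with common injective weights), then the MSF of `(V, E₁ ∪ E₂)` coincides with the
MSF of `(V, F₁ ∪ F₂)`. -/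
theorem msf_union_eq_msf_of_msf_union {V : Type} [Fintype V] [DecidableEq V]
    (E₁ E₂ F₁ F₂ : Finset (Sym2 V)) (w : Sym2 V → ℝ)
    (hinj : Set.InjOn w (↑(E₁ ∪ E₂) : Set (Sym2 V)))
    (hnd : ∀ f ∈ E₁ ∪ E₂, ¬ f.IsDiag)
    (h₁ : IsMSF V w E₁ F₁) (h₂ : IsMSF V w E₂ F₂) :
    ∀ F : Finset (Sym2 V), IsMSF V w (E₁ ∪ E₂) F ↔ IsMSF V w (F₁ ∪ F₂) F := by
  have hFFsub : F₁ ∪ F₂ ⊆ E₁ ∪ E₂ := Finset.union_subset_union h₁.1.1 h₂.1.1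
  -- the union of the two forests has the same reachability as the union of the edge sets
  have hR : ∀ x y : V, (gr (E₁ ∪ E₂)).Reachable x y ↔ (gr (F₁ ∪ F₂)).Reachable x y := by
    intro x y
    constructor
    · refine reach_hom ?_
      intro x' y' hxy
      rw [gr_adj] at hxy
      rcases Finset.mem_union.mp hxy.1 with h | h
      · exact ((h₁.1.2.2 x' y').mp (Adj.reachable (gr_adj.mpr ⟨h, hxy.2⟩))).mono
          (gr_mono Finset.subset_union_left)
      · exact ((h₂.1.2.2 x' y').mp (Adj.reachable (gr_adj.mpr ⟨h, hxy.2⟩))).mono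
          (gr_mono Finset.subset_union_right)
    · intro h
      exact h.mono (gr_mono hFFsub)
  -- the improvement step
  have improve : ∀ F' : Finset (Sym2 V), ∀ e : Sym2 V,
      IsSpanningForest V (E₁ ∪ E₂) F' → e ∈ F' → e ∉ F₁ ∪ F₂ →
      ∃ F'' : Finset (Sym2 V), IsSpanningForest V (E₁ ∪ E₂) F'' ∧
        (∑ x ∈ F'', w x < ∑ x ∈ F', w x) ∧
        ((F'' \ (F₁ ∪ F₂)).card < (F' \ (F₁ ∪ F₂)).card) := by
    intro F' e hSF heF' heFF
    have heE : e ∈ E₁ ∪ E₂ := hSF.1 heF'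
    have hend : ¬e.IsDiag := hnd e heE
    have key : ∃ g ∈ F₁ ∪ F₂, g ∉ F'.erase e ∧ w g < w e ∧
        IsSpanningForest V (E₁ ∪ E₂) (insert g (F'.erase e)) := by
      rcases Finset.mem_union.mp heE with h | h
      · obtain ⟨g, hg1, hg2, hg3, hg4⟩ := exchange hinj Finset.subset_union_left h₁ hSF
          heF' h (fun hc => heFF (Finset.mem_union_left _ hc)) hend
        exact ⟨g, Finset.mem_union_left _ hg1, hg2, hg3, hg4⟩
      · obtain ⟨g, hg1, hg2, hg3, hg4⟩ := exchange hinj Finset.subset_union_right h₂ hSF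
          heF' h (fun hc => heFF (Finset.mem_union_right _ hc)) hend
        exact ⟨g, Finset.mem_union_right _ hg1, hg2, hg3, hg4⟩
    obtain ⟨g, hgFF, hgnotin, hwlt, hSF''⟩ := key
    refine ⟨insert g (F'.erase e), hSF'', ?_, ?_⟩
    · rw [Finset.sum_insert hgnotin]
      have := Finset.sum_erase_add F' w heF'
      linarith
    · have hset : insert g (F'.erase e) \ (F₁ ∪ F₂) = (F' \ (F₁ ∪ F₂)).erase e := by
        ext x
        simp only [Finset.mem_sdiff, Finset.mem_insert, Finset.mem_erase]
        constructor
        · rintro ⟨rfl | ⟨hx1, hx2⟩, hx3⟩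
          · exact absurd hgFF hx3
          · exact ⟨hx1, hx2, hx3⟩
        · rintro ⟨hx1, hx2, hx3⟩
          exact ⟨Or.inr ⟨hx1, hx2⟩, hx3⟩
      rw [hset]
      have hmem : e ∈ F' \ (F₁ ∪ F₂) := Finset.mem_sdiff.mpr ⟨heF', heFF⟩
      rw [Finset.card_erase_of_mem hmem]
      exact Nat.sub_lt (Finset.card_pos.mpr ⟨e, hmem⟩) Nat.one_pos
  -- any spanning forest of the union can be replaced by one inside `F₁ ∪ F₂`
  have reduce : ∀ n : ℕ, ∀ F' : Finset (Sym2 V), IsSpanningForest V (E₁ ∪ E₂) F' →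
      (F' \ (F₁ ∪ F₂)).card = n →
      ∃ F₀ : Finset (Sym2 V), F₀ ⊆ F₁ ∪ F₂ ∧ IsSpanningForest V (E₁ ∪ E₂) F₀ ∧
        ∑ x ∈ F₀, w x ≤ ∑ x ∈ F', w x := by
    intro n
    induction n using Nat.strong_induction_on with
    | _ n ih =>
      intro F' hSF hcard
      by_cases hsub : F' ⊆ F₁ ∪ F₂
      · exact ⟨F', hsub, hSF, le_refl _⟩
      · obtain ⟨e, heF', heFF⟩ := Finset.not_subset.mp hsub
        obtain ⟨F'', hSF'', hsum, hc⟩ := improve F' e hSF heF' heFF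
        obtain ⟨F₀, h1, h2, h3⟩ := ih _ (hcard ▸ hc) F'' hSF'' rfl
        exact ⟨F₀, h1, h2, le_of_lt (lt_of_le_of_lt h3 hsum)⟩
  intro F
  constructor
  · rintro ⟨⟨hFsub, hFac, hFreach⟩, hFmin⟩
    have hFsub' : F ⊆ F₁ ∪ F₂ := by
      by_contra hsub
      obtain ⟨e, heF, heFF⟩ := Finset.not_subset.mp hsub
      obtain ⟨F'', hSF'', hsum, _⟩ := improve F e ⟨hFsub, hFac, hFreach⟩ heF heFF
      exact absurd (hFmin F'' hSF'') (not_le.mpr hsum)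
    refine ⟨⟨hFsub', hFac, fun u v => (hR u v).symm.trans (hFreach u v)⟩, ?_⟩
    intro F' hSF'
    exact hFmin F' ⟨hSF'.1.trans hFFsub, hSF'.2.1, fun u v => (hR u v).trans (hSF'.2.2 u v)⟩
  · rintro ⟨⟨hFsub, hFac, hFreach⟩, hFmin⟩
    refine ⟨⟨hFsub.trans hFFsub, hFac, fun u v => (hR u v).trans (hFreach u v)⟩, ?_⟩
    intro F' hSF'
    obtain ⟨F₀, h1, h2, h3⟩ := reduce _ F' hSF' rfl
    refine le_trans (hFmin F₀ ⟨h1, h2.2.1, fun u v => (hR u v).symm.trans (h2.2.2 u v)⟩) h3
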